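/- (Convergence of Halpern iteration) Let H be a separable real Hilbert space, D ⊆ H nonempty closed convex, T : H → H nonexpansive on D with T(D) ⊆ D, and C := Fix T ∩ D nonempty. Let u, x_0 ∈ D and let (x_n) be generated by x_{n+1} = α_n u + (1 − α_n) T x_n, with all x_n ∈ D, where α_n ∈ (0,1), α_n → 0, ∑ α_n = +∞, and ∑ |α_{n+1} − α_n| < +∞. Then there exists p ∈ C such that (x_n) converges strongly to p and ‖u − p‖ = inf_{w ∈ C} ‖u − w‖, i.e., p is the projection of u onto C. -/

import Mathlib

open Filter Topology TopologicalSpace Function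

variable {H : Type*} [NormedAddCommGroup H] [InnerProductSpace ℝ H]

def WeakConverge (x : ℕ → H) (p : H) : Prop :=
  Tendsto ((toWeakSpace ℝ H) ∘ x) atTop (nhds ((toWeakSpace ℝ H) p))

def FixSet (T : H → H) : Set H := {x | Function.IsFixedPt T x}

def QuasiNonexpansiveOn (T : H → H) (s : Set H) : Prop :=
  ∀ ⦃x⦄, x ∈ s → ∀ ⦃y⦄, y ∈ FixSet T ∩ s → ‖T x - y‖ ≤ ‖x - y‖

def NonexpansiveOn (T : H → H) (s : Set H) : Prop := LipschitzOnWith 1 T s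

structure Halpern (T : H → H) where
  x0 : H
  u : H
  x : ℕ → H
  α : ℕ → ℝ
  update : ∀ k : ℕ, x (k + 1) = (α k) • u + (1 - α k) • (T (x k))
  initial_value : x 0 = x0

/-- Ultrafilter limit of a bounded real sequence exists. -/
lemma halpern_ultra_lim_bdd (U : Ultrafilter ℕ) (f : ℕ → ℝ) {c : ℝ} (h : ∀ n, |f n| ≤ c) :
    ∃ a, Tendsto f U (𝓝 a) := by
  have hcpt : IsCompact (Set.Icc (-c) c) := isCompact_Icc
  have hle : (U.map f : Filter ℝ) ≤ Filter.principal (Set.Icc (-c) c) := by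
    rw [Filter.le_principal_iff]
    exact Filter.mem_map.mpr (Filter.univ_mem' fun n => by
      have := abs_le.mp (h n); exact ⟨this.1, this.2⟩)
  obtain ⟨a, _, hlim⟩ := hcpt.ultrafilter_le_nhds (U.map f) hle
  exact ⟨a, hlim⟩

/-- A bounded sequence has a weak limit along any ultrafilter. -/
lemma halpern_ultra_weak_limit [CompleteSpace H] (U : Ultrafilter ℕ) (y : ℕ → H) {c : ℝ}
    (hy : ∀ n, ‖y n‖ ≤ c) :
    ∃ q : H, ∀ z : H, Tendsto (fun n => (inner ℝ z (y n) : ℝ)) U (𝓝 (inner ℝ z q)) := by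
  have hex : ∀ z : H, ∃ a : ℝ, Tendsto (fun n => (inner ℝ z (y n) : ℝ)) U (𝓝 a) := by
    intro z
    refine halpern_ultra_lim_bdd U _ (c := ‖z‖ * c) fun n => ?_
    refine le_trans (abs_real_inner_le_norm z (y n)) ?_
    exact mul_le_mul_of_nonneg_left (hy n) (norm_nonneg z)
  choose g hg using hex
  have huniq : ∀ z a, Tendsto (fun n => (inner ℝ z (y n) : ℝ)) U (𝓝 a) → g z = a :=
    fun z a h => tendsto_nhds_unique (hg z) h
  have hadd : ∀ z w : H, g (z + w) = g z + g w := by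
    intro z w
    refine huniq _ _ (((hg z).add (hg w)).congr fun n => ?_)
    rw [inner_add_left]
  have hsmul : ∀ (r : ℝ) (z : H), g (r • z) = r * g z := by
    intro r z
    refine huniq _ _ (((hg z).const_mul r).congr fun n => ?_)
    rw [real_inner_smul_left]
  have hbd : ∀ z : H, ‖g z‖ ≤ c * ‖z‖ := by
    intro z
    have h1 : Tendsto (fun n => |(inner ℝ z (y n) : ℝ)|) U (𝓝 |g z|) := (hg z).abs
    have h2 : ∀ n, |(inner ℝ z (y n) : ℝ)| ≤ c * ‖z‖ := fun n => by
      refine le_trans (abs_real_inner_le_norm z (y n)) ?_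
      rw [mul_comm]
      exact mul_le_mul_of_nonneg_right (hy n) (norm_nonneg z)
    rw [Real.norm_eq_abs]
    exact le_of_tendsto h1 (Filter.Eventually.of_forall h2)
  let lin : H →ₗ[ℝ] ℝ := { toFun := g, map_add' := hadd, map_smul' := hsmul }
  let f : H →L[ℝ] ℝ := lin.mkContinuous c hbd
  refine ⟨(InnerProductSpace.toDual ℝ H).symm f, fun z => ?_⟩
  have : (inner ℝ ((InnerProductSpace.toDual ℝ H).symm f) z : ℝ) = f z :=
    InnerProductSpace.toDual_symm_apply
  rw [real_inner_comm, this]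
  exact hg z

/-- Xu's recursion lemma. -/
lemma halpern_xu {s a b c : ℕ → ℝ} (hs : ∀ n, 0 ≤ s n) (ha : ∀ n, a n ∈ Set.Ioo (0:ℝ) 1)
    (hc0 : ∀ n, 0 ≤ c n)
    (hrec : ∀ n, s (n+1) ≤ (1 - a n) * s n + a n * b n + c n)
    (hadiv : Tendsto (fun N => ∑ n ∈ Finset.range N, a n) atTop atTop)
    (hb : ∀ ε > 0, ∀ᶠ n in atTop, b n ≤ ε)
    (hc : Summable c) : Tendsto s atTop (𝓝 0) := by
  rw [Metric.tendsto_atTop]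
  intro ε hε
  have hε4 : 0 < ε/4 := by linarith
  obtain ⟨N₁, hN₁⟩ := (hb (ε/4) hε4).exists_forall_of_atTop
  obtain ⟨N₂, hN₂⟩ := (Metric.tendsto_atTop.mp (tendsto_sum_nat_add c) (ε/4) hε4)
  set N := max N₁ N₂ with hN
  have htail : ∀ j, ∑ i ∈ Finset.range j, c (N + i) ≤ ε/4 := by
    intro j
    have hsum : Summable (fun k => c (k + N)) := (summable_nat_add_iff N).2 hc
    have h1 : ∑ i ∈ Finset.range j, c (N + i) = ∑ i ∈ Finset.range j, c (i + N) := by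
      refine Finset.sum_congr rfl fun i _ => by rw [Nat.add_comm]
    rw [h1]
    refine le_trans (Summable.sum_le_tsum _ (fun i _ => hc0 _) hsum) ?_
    have := hN₂ N (le_max_right _ _)
    rw [Real.dist_eq, sub_zero] at this
    exact (abs_le.mp this.le).2
  set P : ℕ → ℝ := fun j => ∏ i ∈ Finset.range j, (1 - a (N + i)) with hP
  have hP0 : ∀ j, 0 ≤ P j := fun j =>
    Finset.prod_nonneg fun i _ => by have := (ha (N+i)); linarith [this.2]
  have key : ∀ j, s (N + j) ≤ P j * s N + ε/4 + ∑ i ∈ Finset.range j, c (N + i) := by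
    intro j
    induction j with
    | zero => simp [hP]; linarith
    | succ j ih =>
      have haj := ha (N + j)
      have hbj : b (N + j) ≤ ε/4 := hN₁ (N + j) (le_trans (le_max_left _ _) (Nat.le_add_right _ _))
      have h1 := hrec (N + j)
      have h2 : s (N + j + 1) ≤ (1 - a (N+j)) * (P j * s N + ε/4 + ∑ i ∈ Finset.range j, c (N + i))
          + a (N+j) * (ε/4) + c (N + j) := by
        refine le_trans h1 ?_
        have h3 : (1 - a (N+j)) * s (N+j) ≤ (1 - a (N+j)) * (P j * s N + ε/4 + ∑ i ∈ Finset.range j, c (N + i)) := by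
          apply mul_le_mul_of_nonneg_left ih; linarith [haj.2]
        have h4 : a (N+j) * b (N+j) ≤ a (N+j) * (ε/4) :=
          mul_le_mul_of_nonneg_left hbj (le_of_lt haj.1)
        linarith
      have hCsum : 0 ≤ ∑ i ∈ Finset.range j, c (N + i) :=
        Finset.sum_nonneg fun i _ => hc0 _
      have : N + (j+1) = N + j + 1 := rfl
      rw [this]
      simp only [hP, Finset.prod_range_succ, Finset.sum_range_succ]
      have hPj := hP0 j
      have hsN := hs N
      nlinarith [haj.1, haj.2, h2]
  have hSdiv : Tendsto (fun j => ∑ i ∈ Finset.range j, a (N + i)) atTop atTop := by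
    have heq : ∀ j, ∑ i ∈ Finset.range j, a (N + i)
        = (∑ n ∈ Finset.range (N + j), a n) - ∑ n ∈ Finset.range N, a n := by
      intro j
      rw [Finset.sum_range_add]
      ring
    have h1 : Tendsto (fun j => ∑ n ∈ Finset.range (N + j), a n) atTop atTop :=
      (hadiv.comp (tendsto_add_atTop_nat N)).congr (fun j => by simp [Function.comp, Nat.add_comm])
    have h2 := tendsto_atTop_add_const_right atTop (-(∑ n ∈ Finset.range N, a n)) h1
    refine h2.congr fun j => ?_
    rw [heq j]; ring
  have hPexp : ∀ j, P j ≤ Real.exp (-(∑ i ∈ Finset.range j, a (N + i))) := by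
    intro j
    have h1 : P j ≤ ∏ i ∈ Finset.range j, Real.exp (-(a (N + i))) := by
      refine Finset.prod_le_prod (fun i _ => by have := ha (N+i); linarith [this.2]) ?_
      intro i _
      have := Real.add_one_le_exp (-(a (N + i)))
      linarith
    rw [← Real.exp_sum] at h1
    rwa [← Finset.sum_neg_distrib]
  have hPtend : Tendsto P atTop (𝓝 0) := by
    refine squeeze_zero hP0 hPexp ?_
    exact Real.tendsto_exp_atBot.comp (tendsto_neg_atTop_atBot.comp hSdiv)
  have hPs : Tendsto (fun j => P j * s N) atTop (𝓝 0) := by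
    simpa using hPtend.mul_const (s N)
  obtain ⟨J, hJ⟩ := Metric.tendsto_atTop.mp hPs (ε/4) hε4
  refine ⟨N + J, fun n hn => ?_⟩
  have hj : n = N + (n - N) := by omega
  have hjJ : J ≤ n - N := by omega
  have h1 := key (n - N)
  have h2 := htail (n - N)
  have h3 := hJ (n - N) hjJ
  rw [Real.dist_eq, sub_zero] at h3
  have h4 : P (n - N) * s N ≤ ε/4 := (abs_le.mp h3.le).2
  rw [Real.dist_eq, sub_zero, abs_of_nonneg (hs n)]
  rw [hj]
  linarith

lemma halpern_comb_identity (t : ℝ) (a b w : H) :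
    ‖w - (t • a + (1 - t) • b)‖^2
      = t * ‖w - a‖^2 + (1-t) * ‖w - b‖^2 - t*(1-t)*‖a-b‖^2 := by
  simp only [← real_inner_self_eq_norm_sq]
  simp only [inner_sub_left, inner_sub_right, inner_add_left, inner_add_right,
    real_inner_smul_left, real_inner_smul_right]
  rw [real_inner_comm a w, real_inner_comm b w, real_inner_comm b a]
  ring

set_option maxHeartbeats 2000000 in
theorem halpern_convergence [CompleteSpace H] [SeparableSpace H]
    {D : Set H} (hD_closed : IsClosed D) (hD_convex : Convex ℝ D) (hD_nonempty : D.Nonempty)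
    {T : H → H} (hT_nonexp : NonexpansiveOn T D)
    {C : Set H} (hC : C = FixSet T ∩ D) (hCn : C.Nonempty)
    (hT_inD : ∀ x ∈ D, T x ∈ D) (alg : Halpern T)
    (halg_x0 : alg.x0 ∈ D) (halg_u : alg.u ∈ D) (halg_xD : ∀ n, alg.x n ∈ D)
    (hα1 : ∀ n, alg.α n ∈ Set.Ioo (0 : ℝ) 1)
    (hα2 : Tendsto alg.α atTop (nhds 0))
    (hα3 : Tendsto (fun N => ∑ n ∈ Finset.range N, alg.α n) atTop atTop)
    (hα4 : Summable (fun n => |alg.α (n + 1) - alg.α n|)) :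
    ∃ p : H, p ∈ C ∧ Tendsto alg.x atTop (nhds p) ∧
      ‖alg.u - p‖ = ⨅ w : C, ‖alg.u - w‖ := by
  obtain ⟨q0, hq0⟩ := hCn
  have hq0' : q0 ∈ FixSet T ∩ D := hC ▸ hq0
  have hq0fix : T q0 = q0 := hq0'.1
  have hq0D : q0 ∈ D := hq0'.2
  have hne : ∀ {a b : H}, a ∈ D → b ∈ D → ‖T a - T b‖ ≤ ‖a - b‖ := by
    intro a b haD hbD
    have := hT_nonexp.dist_le_mul a haD b hbD
    simpa [dist_eq_norm] using this
  -- closedness and convexity of C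
  have hC_closed : IsClosed C := by
    rw [hC]
    have h1 : ContinuousOn (fun z => T z - z) D :=
      (hT_nonexp.continuousOn).sub continuousOn_id
    have h2 := h1.preimage_isClosed_of_isClosed hD_closed (isClosed_singleton (x := (0:H)))
    have h3 : FixSet T ∩ D = D ∩ (fun z => T z - z) ⁻¹' {0} := by
      ext z
      simp only [Set.mem_inter_iff, Set.mem_preimage, Set.mem_singleton_iff, sub_eq_zero,
        FixSet, Set.mem_setOf_eq, Function.IsFixedPt]
      tauto
    rw [h3]; exact h2
  have hC_convex : Convex ℝ C := by
    rw [hC]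
    intro a ha b hb t s ht hs hts
    have hs1 : s = 1 - t := by linarith
    subst hs1
    have hzD : t • a + (1 - t) • b ∈ D := hD_convex ha.2 hb.2 ht hs hts
    refine ⟨?_, hzD⟩
    set z := t • a + (1 - t) • b with hz
    have hTza : ‖T z - a‖ ≤ (1-t) * ‖a - b‖ := by
      have h1 : ‖T z - a‖ ≤ ‖z - a‖ := by
        have := hne hzD ha.2
        rwa [ha.1] at this
      have h2 : z - a = (1-t) • (b - a) := by rw [hz]; module
      have h3 : ‖z - a‖ = (1-t) * ‖b - a‖ := by
        rw [h2, norm_smul, Real.norm_eq_abs, abs_of_nonneg hs]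
      rw [norm_sub_rev a b]
      linarith
    have hTzb : ‖T z - b‖ ≤ t * ‖a - b‖ := by
      have h1 : ‖T z - b‖ ≤ ‖z - b‖ := by
        have := hne hzD hb.2
        rwa [hb.1] at this
      have h2 : z - b = t • (a - b) := by rw [hz]; module
      have h3 : ‖z - b‖ = t * ‖a - b‖ := by
        rw [h2, norm_smul, Real.norm_eq_abs, abs_of_nonneg ht]
      linarith
    have hid : ‖T z - z‖^2
        = t * ‖T z - a‖^2 + (1-t) * ‖T z - b‖^2 - t*(1-t)*‖a-b‖^2 := by
      conv_lhs => rw [hz]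
      exact halpern_comb_identity t a b (T z)
    have hTza2 : ‖T z - a‖^2 ≤ ((1-t) * ‖a - b‖)^2 := by
      have h9 := pow_le_pow_left₀ (norm_nonneg (T z - a)) hTza 2
      simpa using h9
    have hTzb2 : ‖T z - b‖^2 ≤ (t * ‖a - b‖)^2 := by
      have h9 := pow_le_pow_left₀ (norm_nonneg (T z - b)) hTzb 2
      simpa using h9
    have h6 : t * ‖T z - a‖^2 ≤ t * ((1-t) * ‖a - b‖)^2 := mul_le_mul_of_nonneg_left hTza2 ht
    have h7 : (1-t) * ‖T z - b‖^2 ≤ (1-t) * (t * ‖a - b‖)^2 := mul_le_mul_of_nonneg_left hTzb2 hs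
    have hsq : ‖T z - z‖^2 ≤ 0 := by nlinarith [hid, h6, h7]
    have hsq0 : ‖T z - z‖^2 = 0 := le_antisymm hsq (sq_nonneg _)
    have hnz : ‖T z - z‖ = 0 := by
      exact pow_eq_zero_iff (two_ne_zero) |>.mp hsq0
    exact sub_eq_zero.mp (norm_eq_zero.mp hnz)
  -- boundedness
  set M := max ‖alg.x0 - q0‖ ‖alg.u - q0‖ with hM
  have hM0 : 0 ≤ M := le_trans (norm_nonneg _) (le_max_left _ _)
  have huq0 : ‖alg.u - q0‖ ≤ M := le_max_right _ _
  have hbd : ∀ n, ‖alg.x n - q0‖ ≤ M := by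
    intro n
    induction n with
    | zero => rw [alg.initial_value]; exact le_max_left _ _
    | succ n ih =>
      have h1 : alg.x (n+1) - q0
          = (alg.α n) • (alg.u - q0) + (1 - alg.α n) • (T (alg.x n) - q0) := by
        rw [alg.update n, ← hq0fix]; module
      have h2 : ‖T (alg.x n) - q0‖ ≤ M := by
        have := hne (halg_xD n) hq0D
        rw [hq0fix] at this
        exact le_trans this ih
      have haj := hα1 n
      rw [h1]
      calc ‖(alg.α n) • (alg.u - q0) + (1 - alg.α n) • (T (alg.x n) - q0)‖
          ≤ ‖(alg.α n) • (alg.u - q0)‖ + ‖(1 - alg.α n) • (T (alg.x n) - q0)‖ := norm_add_le _ _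
        _ = (alg.α n) * ‖alg.u - q0‖ + (1 - alg.α n) * ‖T (alg.x n) - q0‖ := by
            rw [norm_smul, norm_smul, Real.norm_eq_abs, Real.norm_eq_abs,
              abs_of_nonneg (le_of_lt haj.1), abs_of_nonneg (by linarith [haj.2])]
        _ ≤ (alg.α n) * M + (1 - alg.α n) * M := by
            have h5 := mul_le_mul_of_nonneg_left huq0 (le_of_lt haj.1)
            have h6 := mul_le_mul_of_nonneg_left h2 (by linarith [haj.2] : (0:ℝ) ≤ 1 - alg.α n)
            linarith
        _ = M := by ring
  have hTbd : ∀ n, ‖T (alg.x n) - q0‖ ≤ M := by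
    intro n
    have := hne (halg_xD n) hq0D
    rw [hq0fix] at this
    exact le_trans this (hbd n)
  have hK : ∀ n, ‖alg.u - T (alg.x n)‖ ≤ 2*M := by
    intro n
    calc ‖alg.u - T (alg.x n)‖ ≤ ‖alg.u - q0‖ + ‖q0 - T (alg.x n)‖ := by
          have : alg.u - T (alg.x n) = (alg.u - q0) + (q0 - T (alg.x n)) := by abel
          rw [this]; exact norm_add_le _ _
      _ ≤ M + M := by
          rw [norm_sub_rev q0 (T (alg.x n))]
          linarith [huq0, hTbd n]
      _ = 2*M := by ring
  have hxnorm : ∀ n, ‖alg.x n‖ ≤ M + ‖q0‖ := by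
    intro n
    have h1 : alg.x n = (alg.x n - q0) + q0 := by abel
    rw [h1]
    exact le_trans (norm_add_le _ _) (by linarith [hbd n])
  -- step 2 : successive differences tend to zero
  have hstep2 : Tendsto (fun n => ‖alg.x (n+1) - alg.x n‖) atTop (𝓝 0) := by
    refine halpern_xu (s := fun n => ‖alg.x (n+1) - alg.x n‖)
      (a := fun n => alg.α (n+1)) (b := fun _ => 0)
      (c := fun n => 2*M * |alg.α (n+1) - alg.α n|)
      (fun n => norm_nonneg _) (fun n => hα1 (n+1))
      (fun n => by positivity) ?_ ?_ ?_ (Summable.mul_left _ hα4)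
    · intro n
      have h1 : alg.x (n+2) - alg.x (n+1)
          = (alg.α (n+1) - alg.α n) • (alg.u - T (alg.x n))
            + (1 - alg.α (n+1)) • (T (alg.x (n+1)) - T (alg.x n)) := by
        rw [alg.update (n+1), alg.update n]; module
      have haj := hα1 (n+1)
      have h2 : ‖alg.x (n+2) - alg.x (n+1)‖
          ≤ |alg.α (n+1) - alg.α n| * ‖alg.u - T (alg.x n)‖
            + (1 - alg.α (n+1)) * ‖T (alg.x (n+1)) - T (alg.x n)‖ := by
        rw [h1]
        refine le_trans (norm_add_le _ _) ?_
        rw [norm_smul, norm_smul, Real.norm_eq_abs, Real.norm_eq_abs,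
          abs_of_nonneg (by linarith [haj.2] : (0:ℝ) ≤ 1 - alg.α (n+1))]
      have h3 : ‖T (alg.x (n+1)) - T (alg.x n)‖ ≤ ‖alg.x (n+1) - alg.x n‖ :=
        hne (halg_xD (n+1)) (halg_xD n)
      have h4 : |alg.α (n+1) - alg.α n| * ‖alg.u - T (alg.x n)‖
          ≤ 2*M * |alg.α (n+1) - alg.α n| := by
        rw [mul_comm (2*M)]
        exact mul_le_mul_of_nonneg_left (hK n) (abs_nonneg _)
      have h5 : (1 - alg.α (n+1)) * ‖T (alg.x (n+1)) - T (alg.x n)‖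
          ≤ (1 - alg.α (n+1)) * ‖alg.x (n+1) - alg.x n‖ :=
        mul_le_mul_of_nonneg_left h3 (by linarith [haj.2])
      calc ‖alg.x (n+1+1) - alg.x (n+1)‖ ≤ _ := h2
        _ ≤ (1 - alg.α (n+1)) * ‖alg.x (n+1) - alg.x n‖ + alg.α (n+1) * 0
            + 2*M * |alg.α (n+1) - alg.α n| := by linarith
    · have h1 : Tendsto (fun N => ∑ n ∈ Finset.range (N+1), alg.α n) atTop atTop :=
        hα3.comp (tendsto_add_atTop_nat 1)
      have h2 := tendsto_atTop_add_const_right atTop (-(alg.α 0)) h1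
      refine h2.congr fun N => ?_
      rw [Finset.sum_range_succ']
      ring
    · intro ε hε
      exact Filter.Eventually.of_forall fun n => le_of_lt hε
  -- step 3 : asymptotic regularity
  have hstep3 : Tendsto (fun n => ‖alg.x n - T (alg.x n)‖) atTop (𝓝 0) := by
    have hub : ∀ n, ‖alg.x n - T (alg.x n)‖
        ≤ ‖alg.x (n+1) - alg.x n‖ + alg.α n * (2*M) := by
      intro n
      have h1 : alg.x (n+1) - T (alg.x n) = (alg.α n) • (alg.u - T (alg.x n)) := by
        rw [alg.update n]; module
      have h2 : ‖alg.x (n+1) - T (alg.x n)‖ ≤ alg.α n * (2*M) := by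
        rw [h1, norm_smul, Real.norm_eq_abs, abs_of_nonneg (le_of_lt (hα1 n).1)]
        exact mul_le_mul_of_nonneg_left (hK n) (le_of_lt (hα1 n).1)
      calc ‖alg.x n - T (alg.x n)‖
          ≤ ‖alg.x n - alg.x (n+1)‖ + ‖alg.x (n+1) - T (alg.x n)‖ := by
            have : alg.x n - T (alg.x n)
                = (alg.x n - alg.x (n+1)) + (alg.x (n+1) - T (alg.x n)) := by abel
            rw [this]; exact norm_add_le _ _
        _ ≤ ‖alg.x (n+1) - alg.x n‖ + alg.α n * (2*M) := by
            rw [norm_sub_rev]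
            linarith [h2]
    refine squeeze_zero (fun n => norm_nonneg _) hub ?_
    have h3 : Tendsto (fun n => alg.α n * (2*M)) atTop (𝓝 0) := by
      simpa using hα2.mul_const (2*M)
    simpa using hstep2.add h3
  -- step 4 : the projection and the limsup inequality
  obtain ⟨p, hpC, hpmin⟩ := exists_norm_eq_iInf_of_complete_convex
    ⟨q0, hq0⟩ (hC_closed.isComplete) hC_convex alg.u
  have hpD : p ∈ D := (hC ▸ hpC).2
  have hpfix : T p = p := (hC ▸ hpC).1
  have hvar : ∀ w ∈ C, (inner ℝ (alg.u - p) (w - p) : ℝ) ≤ 0 :=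
    (norm_eq_iInf_iff_real_inner_le_zero hC_convex hpC).mp hpmin
  have hlimsup : ∀ ε > 0, ∀ᶠ n in atTop, (inner ℝ (alg.u - p) (alg.x n - p) : ℝ) ≤ ε := by
    by_contra hcon
    push_neg at hcon
    obtain ⟨ε, hε, hfreq⟩ := hcon
    have hfreq' : ∃ᶠ n in atTop, ε < (inner ℝ (alg.u - p) (alg.x n - p) : ℝ) := by
      refine hfreq.mono fun n hn => ?_
      exact hn
    haveI hNB : (atTop ⊓ Filter.principal {n | ε < (inner ℝ (alg.u - p) (alg.x n - p) : ℝ)}).NeBot :=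
      Filter.frequently_iff_neBot.mp hfreq'
    set U : Ultrafilter ℕ := Ultrafilter.of
      (atTop ⊓ Filter.principal {n | ε < (inner ℝ (alg.u - p) (alg.x n - p) : ℝ)}) with hU
    have hUle := Ultrafilter.of_le
      (atTop ⊓ Filter.principal {n | ε < (inner ℝ (alg.u - p) (alg.x n - p) : ℝ)})
    have hU1 : (U : Filter ℕ) ≤ atTop := le_trans hUle inf_le_left
    have hU2 : ∀ᶠ n in U, ε < (inner ℝ (alg.u - p) (alg.x n - p) : ℝ) := by
      have := le_trans hUle inf_le_right
      exact this (Filter.mem_principal_self _)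
    obtain ⟨q, hq⟩ := halpern_ultra_weak_limit U alg.x hxnorm
    -- q ∈ D
    have hqD : q ∈ D := by
      by_contra hqD
      obtain ⟨f, r, hf1, hf2⟩ := geometric_hahn_banach_point_closed hD_convex hD_closed hqD
      set v := (InnerProductSpace.toDual ℝ H).symm f with hv
      have hvz : ∀ z : H, (inner ℝ v z : ℝ) = f z := fun z =>
        InnerProductSpace.toDual_symm_apply
      have h1 : Tendsto (fun n => f (alg.x n)) U (𝓝 (f q)) := by
        have h2 := hq v
        rw [hvz q] at h2
        exact h2.congr fun n => hvz (alg.x n)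
      have h4 : r ≤ f q :=
        ge_of_tendsto h1 (Filter.Eventually.of_forall fun n => le_of_lt (hf2 _ (halg_xD n)))
      linarith
    -- T q = q
    have hqfix : T q = q := by
      obtain ⟨r0, hr0⟩ := halpern_ultra_lim_bdd U (fun n => ‖alg.x n - q‖^2)
        (c := (M + ‖q0‖ + ‖q‖)^2) (by
          intro n
          have h1 : ‖alg.x n - q‖ ≤ M + ‖q0‖ + ‖q‖ :=
            le_trans (norm_sub_le _ _) (by linarith [hxnorm n])
          rw [abs_of_nonneg (by positivity)]
          exact pow_le_pow_left₀ (norm_nonneg _) h1 2)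
      have hinner := hq (q - T q)
      have hgid : ∀ n, ‖alg.x n - T q‖^2
          = ‖alg.x n - q‖^2
            + 2*((inner ℝ (q - T q) (alg.x n) : ℝ) - (inner ℝ (q - T q) q : ℝ)) + ‖q - T q‖^2 := by
        intro n
        have h1 : alg.x n - T q = (alg.x n - q) + (q - T q) := by abel
        rw [h1, norm_add_sq_real]
        have h2 : (inner ℝ (alg.x n - q) (q - T q) : ℝ)
            = (inner ℝ (q - T q) (alg.x n) : ℝ) - (inner ℝ (q - T q) q : ℝ) := by
          rw [real_inner_comm, inner_sub_right]
        rw [h2]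
      have hg1 : Tendsto (fun n => ‖alg.x n - T q‖^2) U (𝓝 (r0 + ‖q - T q‖^2)) := by
        have h3 : Tendsto (fun n => ‖alg.x n - q‖^2
            + 2*((inner ℝ (q - T q) (alg.x n) : ℝ) - (inner ℝ (q - T q) q : ℝ)) + ‖q - T q‖^2) U
            (𝓝 (r0 + 2*((inner ℝ (q - T q) q : ℝ) - (inner ℝ (q - T q) q : ℝ)) + ‖q - T q‖^2)) := by
          exact ((hr0.add (((hinner.sub_const _)).const_mul 2)).add_const _)
        have h4 : r0 + 2*((inner ℝ (q - T q) q : ℝ) - (inner ℝ (q - T q) q : ℝ)) + ‖q - T q‖^2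
            = r0 + ‖q - T q‖^2 := by ring
        rw [h4] at h3
        exact h3.congr fun n => (hgid n).symm
      have hub : ∀ n, ‖alg.x n - T q‖^2
          ≤ (‖alg.x n - T (alg.x n)‖ + ‖alg.x n - q‖)^2 := by
        intro n
        have h1 : ‖alg.x n - T q‖ ≤ ‖alg.x n - T (alg.x n)‖ + ‖alg.x n - q‖ := by
          have h2 : ‖T (alg.x n) - T q‖ ≤ ‖alg.x n - q‖ := hne (halg_xD n) hqD
          calc ‖alg.x n - T q‖ ≤ ‖alg.x n - T (alg.x n)‖ + ‖T (alg.x n) - T q‖ := by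
                have : alg.x n - T q = (alg.x n - T (alg.x n)) + (T (alg.x n) - T q) := by abel
                rw [this]; exact norm_add_le _ _
            _ ≤ _ := by linarith
        exact pow_le_pow_left₀ (norm_nonneg _) h1 2
      have hh : Tendsto (fun n => (‖alg.x n - T (alg.x n)‖ + ‖alg.x n - q‖)^2) U (𝓝 r0) := by
        have t1 : Tendsto (fun n => ‖alg.x n - T (alg.x n)‖^2) U (𝓝 0) := by
          have := (hstep3.mul hstep3).mono_left hU1
          simpa [sq] using this
        have t2 : Tendsto (fun n => 2*‖alg.x n - T (alg.x n)‖*‖alg.x n - q‖) U (𝓝 0) := by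
          have hb2 : ∀ n, 2*‖alg.x n - T (alg.x n)‖*‖alg.x n - q‖
              ≤ 2*(M + ‖q0‖ + ‖q‖)*‖alg.x n - T (alg.x n)‖ := by
            intro n
            have h1 : ‖alg.x n - q‖ ≤ M + ‖q0‖ + ‖q‖ :=
              le_trans (norm_sub_le _ _) (by linarith [hxnorm n])
            nlinarith [norm_nonneg (alg.x n - T (alg.x n))]
          have h2 : Tendsto (fun n => 2*(M + ‖q0‖ + ‖q‖)*‖alg.x n - T (alg.x n)‖) atTop (𝓝 0) := by
            simpa using hstep3.const_mul (2*(M + ‖q0‖ + ‖q‖))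
          refine (squeeze_zero (fun n => by positivity) hb2 h2).mono_left hU1
        have h5 : Tendsto (fun n => ‖alg.x n - T (alg.x n)‖^2
            + 2*‖alg.x n - T (alg.x n)‖*‖alg.x n - q‖ + ‖alg.x n - q‖^2) U (𝓝 (0 + 0 + r0)) :=
          (t1.add t2).add hr0
        rw [zero_add, zero_add] at h5
        exact h5.congr fun n => by ring
      have hle : r0 + ‖q - T q‖^2 ≤ r0 :=
        le_of_tendsto_of_tendsto' hg1 hh hub
      have : ‖q - T q‖ = 0 := by nlinarith [norm_nonneg (q - T q), sq_nonneg ‖q - T q‖]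
      have := sub_eq_zero.mp (norm_eq_zero.mp this)
      exact this.symm
    -- contradiction with variational inequality
    have hqC : q ∈ C := by rw [hC]; exact ⟨hqfix, hqD⟩
    have h1 : Tendsto (fun n => (inner ℝ (alg.u - p) (alg.x n - p) : ℝ)) U
        (𝓝 ((inner ℝ (alg.u - p) (q - p) : ℝ))) := by
      have h2 := hq (alg.u - p)
      have h3 : ∀ n, (inner ℝ (alg.u - p) (alg.x n - p) : ℝ)
          = (inner ℝ (alg.u - p) (alg.x n) : ℝ) - (inner ℝ (alg.u - p) p : ℝ) := fun n => by
        rw [inner_sub_right]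
      have h4 : (inner ℝ (alg.u - p) (q - p) : ℝ)
          = (inner ℝ (alg.u - p) q : ℝ) - (inner ℝ (alg.u - p) p : ℝ) := by
        rw [inner_sub_right]
      rw [h4]
      exact ((h2.sub_const _).congr fun n => (h3 n).symm)
    have h5 : ε ≤ (inner ℝ (alg.u - p) (q - p) : ℝ) :=
      ge_of_tendsto h1 (hU2.mono fun n hn => le_of_lt hn)
    have h6 := hvar q hqC
    linarith
  -- step 5 : strong convergence
  have hstep5 : Tendsto (fun n => ‖alg.x n - p‖^2) atTop (𝓝 0) := by
    refine halpern_xu (s := fun n => ‖alg.x n - p‖^2) (a := alg.α)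
      (b := fun n => 2*(inner ℝ (alg.u - p) (alg.x (n+1) - p) : ℝ)) (c := fun _ => 0)
      (fun n => sq_nonneg _) hα1 (fun n => le_refl 0) ?_ hα3 ?_ summable_zero
    · intro n
      show ‖alg.x (n+1) - p‖^2 ≤ (1 - alg.α n) * ‖alg.x n - p‖^2
          + alg.α n * (2*(inner ℝ (alg.u - p) (alg.x (n+1) - p) : ℝ)) + 0
      have haj := hα1 n
      have hxp : alg.x (n+1) - p
          = (alg.α n) • (alg.u - p) + (1 - alg.α n) • (T (alg.x n) - p) := by
        rw [alg.update n, ← hpfix]; module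
      set A := (alg.α n) • (alg.u - p) with hA
      set B := (1 - alg.α n) • (T (alg.x n) - p) with hB
      have hid : ‖A + B‖^2 = ‖A‖^2 + 2*(inner ℝ A B : ℝ) + ‖B‖^2 := norm_add_sq_real A B
      have hinAB : (inner ℝ A (A + B) : ℝ) = ‖A‖^2 + (inner ℝ A B : ℝ) := by
        rw [inner_add_right, real_inner_self_eq_norm_sq]
      have hinA : (inner ℝ A (alg.x (n+1) - p) : ℝ)
          = (alg.α n) * (inner ℝ (alg.u - p) (alg.x (n+1) - p) : ℝ) := by
        rw [hA, real_inner_smul_left]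
      have hBnorm : ‖B‖ = (1 - alg.α n) * ‖T (alg.x n) - p‖ := by
        rw [hB, norm_smul, Real.norm_eq_abs, abs_of_nonneg (by linarith [haj.2])]
      have hTp : ‖T (alg.x n) - p‖ ≤ ‖alg.x n - p‖ := by
        have := hne (halg_xD n) hpD
        rwa [hpfix] at this
      have e1 : ‖alg.x (n+1) - p‖^2 = ‖A‖^2 + 2*(inner ℝ A B : ℝ) + ‖B‖^2 := by
        rw [hxp]; exact norm_add_sq_real A B
      have e2 : (alg.α n) * (inner ℝ (alg.u - p) (alg.x (n+1) - p) : ℝ)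
          = ‖A‖^2 + (inner ℝ A B : ℝ) := by
        rw [← hinA, hxp, inner_add_right, real_inner_self_eq_norm_sq]
      have hBsq : ‖B‖^2 ≤ (1 - alg.α n) * ‖alg.x n - p‖^2 := by
        rw [hBnorm, mul_pow]
        have h8 : ‖T (alg.x n) - p‖^2 ≤ ‖alg.x n - p‖^2 := by
          nlinarith [norm_nonneg (T (alg.x n) - p), norm_nonneg (alg.x n - p), hTp]
        have h9 : (1 - alg.α n)^2 ≤ 1 - alg.α n := by nlinarith [haj.1, haj.2]
        nlinarith [sq_nonneg (1 - alg.α n), sq_nonneg ‖alg.x n - p‖, h8, h9]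
      have hA0 : (0:ℝ) ≤ ‖A‖^2 := sq_nonneg _
      nlinarith [e1, e2, hBsq, hA0]
    · intro ε hε
      have h1 := hlimsup (ε/2) (by linarith)
      rw [Filter.eventually_atTop] at h1 ⊢
      obtain ⟨N, hN⟩ := h1
      refine ⟨N, fun n hn => ?_⟩
      show 2*(inner ℝ (alg.u - p) (alg.x (n+1) - p) : ℝ) ≤ ε
      have := hN (n+1) (by omega)
      linarith
  have hconv : Tendsto alg.x atTop (𝓝 p) := by
    have h1 : Tendsto (fun n => ‖alg.x n - p‖) atTop (𝓝 0) := by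
      have h2 : Tendsto (fun n => Real.sqrt (‖alg.x n - p‖^2)) atTop (𝓝 (Real.sqrt 0)) :=
        (Real.continuous_sqrt.continuousAt).tendsto.comp hstep5
      rw [Real.sqrt_zero] at h2
      exact h2.congr fun n => Real.sqrt_sq (norm_nonneg _)
    rw [tendsto_iff_dist_tendsto_zero]
    exact h1.congr fun n => (dist_eq_norm _ _).symm
  exact ⟨p, hpC, hconv, hpmin⟩
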